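/- Let x ≤ n be natural numbers and q, q' > 0. Then ∫_0^1 max(π/q, (1−π)/q') · π^x (1−π)^{n−x} dπ = (1/q') β_{q/(q+q')}(x+1, n−x+2) + (1/q) β_{q'/(q+q')}(n−x+1, x+2), where β_t(a,b) = ∫_0^t s^{a−1}(1−s)^{b−1} ds is the incomplete beta function. Consequently the zero-expected-pay-out constraint ∫_0^1 (max(π/q,(1−π)/q') − 1) π^x(1−π)^{n−x} dπ = 0 is equivalent to (1/q') β_{q/(q+q')}(x+1, n−x+2) + (1/q) β_{q'/(q+q')}(n−x+1, x+2) = β(x+1, n−x+1), where β(a,b) = β_1(a,b). -/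

import Mathlib

open intervalIntegral

/-- The incomplete beta function `β_t(a, b) = ∫_0^t s^(a−1) (1−s)^(b−1) ds`
for positive natural parameters `a`, `b`. -/
noncomputable def incBeta (t : ℝ) (a b : ℕ) : ℝ :=
  ∫ s in (0 : ℝ)..t, s ^ (a - 1) * (1 - s) ^ (b - 1)

/-- In the frequency model with posterior weight `π^x (1−π)^(n−x)`, the
expected optimal pay-out integral evaluates in terms of incomplete beta functions:
`∫_0^1 max(π/q, (1−π)/q') π^x (1−π)^(n−x) dπ
  = (1/q') β_{q/(q+q')}(x+1, n−x+2) + (1/q) β_{q'/(q+q')}(n−x+1, x+2)`,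
and hence the zero-expected-pay-out constraint is equivalent to
`(1/q') β_{q/(q+q')}(x+1, n−x+2) + (1/q) β_{q'/(q+q')}(n−x+1, x+2) = β(x+1, n−x+1)`. -/
theorem frequency_model_constraint (x n : ℕ) (hxn : x ≤ n)
    (q q' : ℝ) (hq : 0 < q) (hq' : 0 < q') :
    ((∫ π in (0 : ℝ)..1, max (π / q) ((1 - π) / q') * (π ^ x * (1 - π) ^ (n - x)))
        = (1 / q') * incBeta (q / (q + q')) (x + 1) (n - x + 2)
          + (1 / q) * incBeta (q' / (q + q')) (n - x + 1) (x + 2)) ∧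
    ((∫ π in (0 : ℝ)..1, (max (π / q) ((1 - π) / q') - 1) * (π ^ x * (1 - π) ^ (n - x))) = 0
        ↔ (1 / q') * incBeta (q / (q + q')) (x + 1) (n - x + 2)
            + (1 / q) * incBeta (q' / (q + q')) (n - x + 1) (x + 2)
          = incBeta 1 (x + 1) (n - x + 1)) := by
  have hqq' : 0 < q + q' := by linarith
  set c : ℝ := q / (q + q') with hc
  have hc0 : 0 ≤ c := by positivity
  have hc1 : c ≤ 1 := by
    rw [hc, div_le_one hqq']; linarith
  have hcont : Continuous fun π : ℝ =>
      max (π / q) ((1 - π) / q') * (π ^ x * (1 - π) ^ (n - x)) := by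
    apply Continuous.mul
    · exact ((continuous_id.div_const q).max ((continuous_const.sub continuous_id).div_const q'))
    · continuity
  have hcontw : Continuous fun π : ℝ => π ^ x * (1 - π) ^ (n - x) := by continuity
  -- max equals (1-π)/q' on [0,c]
  have hmax1 : ∀ π ∈ Set.Icc (0:ℝ) c,
      max (π / q) ((1 - π) / q') = (1 - π) / q' := by
    intro π hπ
    apply max_eq_right
    rw [div_le_div_iff₀ hq hq']
    have : π * (q + q') ≤ q := by
      have := hπ.2
      rw [hc, le_div_iff₀ hqq'] at this
      linarith
    nlinarith
  have hmax2 : ∀ π ∈ Set.Icc c (1:ℝ),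
      max (π / q) ((1 - π) / q') = π / q := by
    intro π hπ
    apply max_eq_left
    rw [div_le_div_iff₀ hq' hq]
    have : q ≤ π * (q + q') := by
      have := hπ.1
      rw [hc, div_le_iff₀ hqq'] at this
      linarith
    nlinarith
  have hsplit : (∫ π in (0:ℝ)..1, max (π / q) ((1 - π) / q') * (π ^ x * (1 - π) ^ (n - x)))
      = (∫ π in (0:ℝ)..c, max (π / q) ((1 - π) / q') * (π ^ x * (1 - π) ^ (n - x)))
      + ∫ π in c..(1:ℝ), max (π / q) ((1 - π) / q') * (π ^ x * (1 - π) ^ (n - x)) := by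
    rw [intervalIntegral.integral_add_adjacent_intervals
      (hcont.intervalIntegrable _ _) (hcont.intervalIntegrable _ _)]
  have hI1 : (∫ π in (0:ℝ)..c, max (π / q) ((1 - π) / q') * (π ^ x * (1 - π) ^ (n - x)))
      = (1 / q') * incBeta c (x + 1) (n - x + 2) := by
    rw [show incBeta c (x + 1) (n - x + 2)
        = ∫ s in (0:ℝ)..c, s ^ x * (1 - s) ^ (n - x + 1) by simp [incBeta]]
    rw [← intervalIntegral.integral_const_mul]
    apply intervalIntegral.integral_congr
    intro π hπ
    rw [Set.uIcc_of_le hc0] at hπ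
    dsimp only
    rw [hmax1 π hπ]
    ring
  have hI2 : (∫ π in c..(1:ℝ), max (π / q) ((1 - π) / q') * (π ^ x * (1 - π) ^ (n - x)))
      = (1 / q) * incBeta (q' / (q + q')) (n - x + 1) (x + 2) := by
    have hcc : q' / (q + q') = 1 - c := by
      rw [hc]; field_simp; ring
    rw [hcc]
    rw [show incBeta (1 - c) (n - x + 1) (x + 2)
        = ∫ s in (0:ℝ)..(1-c), s ^ (n - x) * (1 - s) ^ (x + 1) by simp [incBeta]]
    have hsub : (∫ s in (0:ℝ)..(1-c), s ^ (n - x) * (1 - s) ^ (x + 1))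
        = ∫ π in c..(1:ℝ), (1 - π) ^ (n - x) * (1 - (1 - π)) ^ (x + 1) := by
      rw [intervalIntegral.integral_comp_sub_left
        (fun s => s ^ (n - x) * (1 - s) ^ (x + 1)) 1]
      norm_num
    rw [hsub, ← intervalIntegral.integral_const_mul]
    apply intervalIntegral.integral_congr
    intro π hπ
    rw [Set.uIcc_of_le hc1] at hπ
    dsimp only
    rw [hmax2 π hπ]
    ring
  have h1 : (∫ π in (0 : ℝ)..1, max (π / q) ((1 - π) / q') * (π ^ x * (1 - π) ^ (n - x)))
        = (1 / q') * incBeta (q / (q + q')) (x + 1) (n - x + 2)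
          + (1 / q) * incBeta (q' / (q + q')) (n - x + 1) (x + 2) := by
    rw [hsplit, hI1, hI2]
  refine ⟨h1, ?_⟩
  have hw : (∫ π in (0:ℝ)..1, π ^ x * (1 - π) ^ (n - x))
      = incBeta 1 (x + 1) (n - x + 1) := by simp [incBeta]
  have hdiff : (∫ π in (0 : ℝ)..1, (max (π / q) ((1 - π) / q') - 1) * (π ^ x * (1 - π) ^ (n - x)))
      = (∫ π in (0 : ℝ)..1, max (π / q) ((1 - π) / q') * (π ^ x * (1 - π) ^ (n - x)))
        - ∫ π in (0:ℝ)..1, π ^ x * (1 - π) ^ (n - x) := by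
    rw [← intervalIntegral.integral_sub (hcont.intervalIntegrable _ _)
      (hcontw.intervalIntegrable _ _)]
    apply intervalIntegral.integral_congr
    intro π _
    ring
  rw [hdiff, h1, hw, sub_eq_zero]
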